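/- Let u, v be unit vectors in ℝ^d (d ≥ 4) with angle θ = arccos(u·v) ∈ [0, 9π/10], and 0 ≤ ξ ≤ θ/(4√d). Let x be uniform on {x ∈ S^{d-1} : v · x = ξ}. Then E[(u · x)²] ≤ 5θ²/d. -/

import Mathlib

open MeasureTheory
open scoped RealInnerProductSpace

/-- The uniform probability distribution on the slice `{x ∈ S^{d-1} : v·x = ξ}`:
a probability measure concentrated on the slice that is invariant under every
linear isometry of `ℝ^d` fixing `v`. -/
def IsUniformOnSlice {d : ℕ} (v : EuclideanSpace ℝ (Fin d)) (ξ : ℝ)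
    (μ : Measure (EuclideanSpace ℝ (Fin d))) : Prop :=
  IsProbabilityMeasure μ ∧ μ {x | ‖x‖ = 1 ∧ ⟪v, x⟫ = ξ}ᶜ = 0 ∧
    ∀ f : EuclideanSpace ℝ (Fin d) ≃ₗᵢ[ℝ] EuclideanSpace ℝ (Fin d),
      f v = v → Measure.map (⇑f) μ = μ


namespace SliceAux

variable {d : ℕ} {v : EuclideanSpace ℝ (Fin d)} {ξ : ℝ}
  {μ : Measure (EuclideanSpace ℝ (Fin d))}

lemma slice_ae (hμ : IsUniformOnSlice v ξ μ) :
    ∀ᵐ x ∂μ, ‖x‖ = 1 ∧ ⟪v, x⟫ = ξ := by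
  rw [MeasureTheory.ae_iff]
  exact hμ.2.1

lemma integral_comp_iso (hμ : IsUniformOnSlice v ξ μ)
    (f : EuclideanSpace ℝ (Fin d) ≃ₗᵢ[ℝ] EuclideanSpace ℝ (Fin d)) (hf : f v = v)
    (g : EuclideanSpace ℝ (Fin d) → ℝ) (hg : Continuous g) :
    ∫ x, g (f x) ∂μ = ∫ x, g x ∂μ := by
  conv_rhs => rw [← hμ.2.2 f hf]
  rw [integral_map f.continuous.measurable.aemeasurable hg.aestronglyMeasurable]

lemma integrable_inner (hμ : IsUniformOnSlice v ξ μ)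
    (w : EuclideanSpace ℝ (Fin d)) :
    Integrable (fun x => ⟪w, x⟫) μ := by
  haveI := hμ.1
  refine Integrable.mono' (integrable_const ‖w‖)
    (Continuous.aestronglyMeasurable (continuous_const.inner continuous_id)) ?_
  filter_upwards [slice_ae hμ] with x hx
  calc ‖⟪w, x⟫‖ ≤ ‖w‖ * ‖x‖ := norm_inner_le_norm w x
    _ = ‖w‖ := by rw [hx.1, mul_one]

lemma integrable_inner_sq (hμ : IsUniformOnSlice v ξ μ)
    (w : EuclideanSpace ℝ (Fin d)) :
    Integrable (fun x => ⟪w, x⟫ ^ 2) μ := by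
  haveI := hμ.1
  refine Integrable.mono' (integrable_const (‖w‖ ^ 2))
    (Continuous.aestronglyMeasurable ((continuous_const.inner continuous_id).pow 2)) ?_
  filter_upwards [slice_ae hμ] with x hx
  have h1 : ‖⟪w, x⟫‖ ≤ ‖w‖ := by
    calc ‖⟪w, x⟫‖ ≤ ‖w‖ * ‖x‖ := norm_inner_le_norm w x
      _ = ‖w‖ := by rw [hx.1, mul_one]
  calc ‖⟪w, x⟫ ^ 2‖ = ‖⟪w, x⟫‖ ^ 2 := by rw [norm_pow]
    _ ≤ ‖w‖ ^ 2 := pow_le_pow_left₀ (norm_nonneg _) h1 2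

lemma integral_inner_eq_zero (hμ : IsUniformOnSlice v ξ μ)
    (w : EuclideanSpace ℝ (Fin d)) (hw : ⟪v, w⟫ = 0) :
    ∫ x, ⟪w, x⟫ ∂μ = 0 := by
  set K : Submodule ℝ (EuclideanSpace ℝ (Fin d)) := ℝ ∙ v with hK
  set f := K.reflection with hf
  have hfv : f v = v :=
    Submodule.reflection_mem_subspace_eq_self (Submodule.mem_span_singleton_self v)
  have hfw : f w = -w :=
    Submodule.reflection_mem_subspace_orthogonalComplement_eq_neg
      (Submodule.mem_orthogonal_singleton_iff_inner_right.2 hw)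
  have key : ∫ x, ⟪w, f x⟫ ∂μ = ∫ x, ⟪w, x⟫ ∂μ :=
    integral_comp_iso hμ f hfv _ (continuous_const.inner continuous_id)
  have h2 : ∀ x, ⟪w, f x⟫ = -⟪w, x⟫ := by
    intro x
    have : ⟪w, f x⟫ = ⟪f.symm w, x⟫ := by
      conv_lhs => rw [← f.apply_symm_apply w]
      exact f.inner_map_map (f.symm w) x
    rw [this, Submodule.reflection_symm, hfw, inner_neg_left]
  have h3 : ∫ x, ⟪w, f x⟫ ∂μ = -∫ x, ⟪w, x⟫ ∂μ := by
    simp_rw [h2]; exact integral_neg _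
  linarith [key, h3]

end SliceAux

namespace SliceAux2
open SliceAux

variable {d : ℕ} {v : EuclideanSpace ℝ (Fin d)} {ξ : ℝ}
  {μ : Measure (EuclideanSpace ℝ (Fin d))}

lemma integral_inner_sq (hμ : IsUniformOnSlice v ξ μ) (hd : 2 ≤ d) (hv : ‖v‖ = 1)
    (w : EuclideanSpace ℝ (Fin d)) (hw : ⟪v, w⟫ = 0) (hwn : ‖w‖ = 1) :
    ∫ x, ⟪w, x⟫ ^ 2 ∂μ = (1 - ξ ^ 2) / (d - 1) := by
  haveI := hμ.1
  haveI : NeZero d := ⟨by omega⟩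
  have h01 : (0 : Fin d) ≠ 1 := by
    intro h
    have h2 := congrArg Fin.val h
    rw [Fin.val_zero, Fin.val_one', Nat.mod_eq_of_lt (by omega)] at h2
    omega
  have hvv : ⟪v, v⟫ = 1 := by rw [real_inner_self_eq_norm_sq, hv, one_pow]
  have hww : ⟪w, w⟫ = 1 := by rw [real_inner_self_eq_norm_sq, hwn, one_pow]
  have hwv : ⟪w, v⟫ = 0 := by rw [real_inner_comm]; exact hw
  set c : Fin d → EuclideanSpace ℝ (Fin d) := fun i => if i = 0 then v else w with hc
  have hc0 : c 0 = v := if_pos rfl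
  have hc1 : c 1 = w := if_neg (Ne.symm h01)
  have hon : Orthonormal ℝ (({0, 1} : Set (Fin d)).restrict c) := by
    rw [orthonormal_iff_ite]
    rintro ⟨i, hi⟩ ⟨j, hj⟩
    rcases hi with rfl | hi <;> [skip; (rw [Set.mem_singleton_iff] at hi; subst hi)] <;>
      (rcases hj with rfl | hj <;> [skip; (rw [Set.mem_singleton_iff] at hj; subst hj)])
    · rw [if_pos rfl]; show ⟪c 0, c 0⟫ = 1; rw [hc0]; exact hvv
    · rw [if_neg (fun h => h01 (congrArg Subtype.val h))]
      show ⟪c 0, c 1⟫ = 0; rw [hc0, hc1]; exact hw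
    · rw [if_neg (fun h => (Ne.symm h01) (congrArg Subtype.val h))]
      show ⟪c 1, c 0⟫ = 0; rw [hc0, hc1]; exact hwv
    · rw [if_pos rfl]; show ⟪c 1, c 1⟫ = 1; rw [hc1]; exact hww
  obtain ⟨b, hb⟩ := hon.exists_orthonormalBasis_extension_of_card_eq
    (by simp [finrank_euclideanSpace]) (v := c)
  have hb0 : b 0 = v := by simpa [hc] using hb 0 (by simp)
  have hb1 : b 1 = w := by simpa [hc, h01.symm] using hb 1 (by simp)
  -- all non-zero coordinates have the same second moment
  have hkey : ∀ i : Fin d, i ≠ 0 → ∫ x, ⟪b i, x⟫ ^ 2 ∂μ = ∫ x, ⟪w, x⟫ ^ 2 ∂μ := by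
    intro i hi
    set e := Equiv.swap i 1 with he
    set f := b.repr.trans ((LinearIsometryEquiv.piLpCongrLeft 2 ℝ ℝ e).trans b.repr.symm)
      with hf
    have hfb : ∀ j, f (b j) = b (e j) := by
      intro j
      simp only [hf, LinearIsometryEquiv.trans_apply, OrthonormalBasis.repr_self]
      rw [EuclideanSpace.piLpCongrLeft_single]
      exact b.repr_symm_single (e j)
    have hfv : f v = v := by
      rw [← hb0, hfb, he, Equiv.swap_apply_of_ne_of_ne (Ne.symm hi) h01]
    have hfbi : f (b i) = b 1 := by rw [hfb, he, Equiv.swap_apply_left]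
    have := integral_comp_iso hμ f hfv (fun x => ⟪b 1, x⟫ ^ 2)
      ((continuous_const.inner continuous_id).pow 2)
    rw [← hb1, ← this]
    refine integral_congr_ae (Filter.Eventually.of_forall fun x => ?_)
    show ⟪b i, x⟫ ^ 2 = ⟪b 1, f x⟫ ^ 2
    rw [← hfbi, f.inner_map_map]
  have hsum_ae : ∀ᵐ x ∂μ, ∑ j ∈ Finset.univ.erase 0, ⟪b j, x⟫ ^ 2 = 1 - ξ ^ 2 := by
    filter_upwards [slice_ae hμ] with x hx
    have hps : ∑ j, ⟪b j, x⟫ ^ 2 = 1 := by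
      have h := b.sum_inner_mul_inner x x
      have : ∀ j, ⟪x, b j⟫ * ⟪b j, x⟫ = ⟪b j, x⟫ ^ 2 := by
        intro j; rw [real_inner_comm x (b j), sq]
      simp_rw [this] at h
      rw [h, real_inner_self_eq_norm_sq, hx.1, one_pow]
    rw [Finset.sum_erase_eq_sub (Finset.mem_univ 0), hps, hb0, hx.2]
  have hint : ∫ x, ∑ j ∈ Finset.univ.erase 0, ⟪b j, x⟫ ^ 2 ∂μ = 1 - ξ ^ 2 := by
    rw [integral_congr_ae hsum_ae, integral_const, probReal_univ, one_smul]
  rw [integral_finset_sum _ (fun j _ => integrable_inner_sq hμ (b j))] at hint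
  have hconst : ∀ j ∈ Finset.univ.erase (0 : Fin d),
      ∫ x, ⟪b j, x⟫ ^ 2 ∂μ = ∫ x, ⟪w, x⟫ ^ 2 ∂μ := by
    intro j hj
    exact hkey j (Finset.ne_of_mem_erase hj)
  rw [Finset.sum_congr rfl hconst, Finset.sum_const, Finset.card_erase_of_mem (Finset.mem_univ _),
    Finset.card_univ, Fintype.card_fin, nsmul_eq_mul] at hint
  have hd1 : ((d - 1 : ℕ) : ℝ) = (d : ℝ) - 1 := by
    rw [Nat.cast_sub (by omega)]; simp
  rw [hd1] at hint
  have hne : (d : ℝ) - 1 ≠ 0 := by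
    have : (2 : ℝ) ≤ d := by exact_mod_cast hd
    linarith
  rw [eq_div_iff hne, mul_comm]
  exact hint

end SliceAux2


set_option maxHeartbeats 1000000 in
open SliceAux SliceAux2 in
theorem stmt_13 (d : ℕ) (hd : 4 ≤ d)
    (u v : EuclideanSpace ℝ (Fin d)) (hu : ‖u‖ = 1) (hv : ‖v‖ = 1)
    (θ : ℝ) (hθ : θ = Real.arccos ⟪u, v⟫) (hθub : θ ≤ 9 * Real.pi / 10)
    (ξ : ℝ) (hξ0 : 0 ≤ ξ) (hξ : ξ ≤ θ / (4 * Real.sqrt d))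
    (μ : Measure (EuclideanSpace ℝ (Fin d))) (hμ : IsUniformOnSlice v ξ μ) :
    ∫ x, ⟪u, x⟫ ^ 2 ∂μ ≤ 5 * θ ^ 2 / d := by
  haveI := hμ.1
  have hd4 : (4 : ℝ) ≤ (d : ℝ) := by exact_mod_cast hd
  have hθ0 : 0 ≤ θ := hθ ▸ Real.arccos_nonneg _
  have habs : |⟪u, v⟫| ≤ 1 := by
    calc |⟪u, v⟫| ≤ ‖u‖ * ‖v‖ := abs_real_inner_le_norm u v
      _ = 1 := by rw [hu, hv, one_mul]
  have hcos : ⟪u, v⟫ = Real.cos θ := by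
    rw [hθ, Real.cos_arccos (neg_le_of_abs_le habs) (le_of_abs_le habs)]
  -- ξ² ≤ 1
  have hμne : μ ≠ 0 := IsProbabilityMeasure.ne_zero μ
  haveI := MeasureTheory.ae_neBot.mpr hμne
  have hξ1 : ξ ^ 2 ≤ 1 := by
    obtain ⟨x, hx⟩ := (slice_ae hμ).exists
    have : |ξ| ≤ 1 := by
      rw [← hx.2]
      calc |⟪v, x⟫| ≤ ‖v‖ * ‖x‖ := abs_real_inner_le_norm v x
        _ = 1 := by rw [hv, hx.1, one_mul]
    calc ξ ^ 2 = |ξ| ^ 2 := (sq_abs ξ).symm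
      _ ≤ 1 := by nlinarith [abs_nonneg ξ]
  by_cases hθz : θ = 0
  · -- degenerate case
    subst hθz
    rw [zero_div] at hξ
    have hξz : ξ = 0 := le_antisymm hξ hξ0
    have huv : u = v := by
      have h1 : ⟪u, v⟫ = 1 := by rw [hcos, Real.cos_zero]
      have h2 : ‖u - v‖ ^ 2 = 0 := by
        rw [norm_sub_sq_real, hu, hv, h1]; ring
      have h3 : u - v = 0 := by
        rw [pow_eq_zero_iff (two_ne_zero), norm_eq_zero] at h2
        exact h2
      exact sub_eq_zero.mp h3
    have : ∫ x, ⟪u, x⟫ ^ 2 ∂μ = 0 := by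
      rw [show (0:ℝ) = ∫ _, (0:ℝ) ∂μ by rw [integral_zero]]
      refine integral_congr_ae ?_
      filter_upwards [slice_ae hμ] with x hx
      rw [huv, hx.2, hξz]; ring
    rw [this]
    positivity
  · -- main case
    have hθpos : 0 < θ := lt_of_le_of_ne hθ0 (Ne.symm hθz)
    have hθπ : θ < Real.pi := lt_of_le_of_lt hθub (by nlinarith [Real.pi_pos])
    set s := Real.sin θ with hs
    set cθ := Real.cos θ with hcθ
    have hspos : 0 < s := Real.sin_pos_of_pos_of_lt_pi hθpos hθπ
    set w : EuclideanSpace ℝ (Fin d) := s⁻¹ • (u - cθ • v) with hwdef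
    have hcos' : ⟪v, u⟫ = cθ := by rw [real_inner_comm]; exact hcos
    have hvw : ⟪v, w⟫ = 0 := by
      rw [hwdef, inner_smul_right, inner_sub_right, inner_smul_right,
        hcos', real_inner_self_eq_norm_sq, hv]
      ring
    have hsub : ‖u - cθ • v‖ = s := by
      have h1 : ‖u - cθ • v‖ ^ 2 = s ^ 2 := by
        rw [norm_sub_sq_real, hu, norm_smul, hv, inner_smul_right, hcos]
        have := Real.sin_sq_add_cos_sq θ
        rw [Real.norm_eq_abs]
        nlinarith [sq_abs cθ]
      nlinarith [norm_nonneg (u - cθ • v), hspos]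
    have hnw : ‖w‖ = 1 := by
      rw [hwdef, norm_smul, hsub, Real.norm_eq_abs, abs_inv,
        abs_of_pos hspos, inv_mul_cancel₀ hspos.ne']
    have hueq : u = cθ • v + s • w := by
      rw [hwdef, smul_smul, mul_inv_cancel₀ hspos.ne', one_smul]
      abel
    have hae : ∀ᵐ x ∂μ, ⟪u, x⟫ ^ 2
        = cθ ^ 2 * ξ ^ 2 + (2 * cθ * ξ * s) * ⟪w, x⟫ + s ^ 2 * ⟪w, x⟫ ^ 2 := by
      filter_upwards [slice_ae hμ] with x hx
      rw [hueq, inner_add_left, real_inner_smul_left, real_inner_smul_left, hx.2]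
      ring
    rw [integral_congr_ae hae]
    have hi1 : Integrable (fun _ : EuclideanSpace ℝ (Fin d) => cθ ^ 2 * ξ ^ 2) μ :=
      integrable_const _
    have hi2 : Integrable (fun x => (2 * cθ * ξ * s) * ⟪w, x⟫) μ :=
      (integrable_inner hμ w).const_mul _
    have hi3 : Integrable (fun x => s ^ 2 * ⟪w, x⟫ ^ 2) μ :=
      (integrable_inner_sq hμ w).const_mul _
    have hi12 : Integrable
        (fun x => cθ ^ 2 * ξ ^ 2 + (2 * cθ * ξ * s) * ⟪w, x⟫) μ := hi1.add hi2
    rw [integral_add hi12 hi3, integral_add hi1 hi2, integral_const,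
      integral_const_mul, integral_const_mul,
      integral_inner_eq_zero hμ w hvw,
      integral_inner_sq hμ (by omega) hv w hvw hnw,
      probReal_univ, smul_eq_mul, one_mul, mul_zero, add_zero]
    -- numeric part
    have hc2 : cθ ^ 2 ≤ 1 := by nlinarith [Real.sin_sq_add_cos_sq θ, sq_nonneg s]
    have hs2 : s ^ 2 ≤ θ ^ 2 := by
      have h1 : s ≤ θ := hs ▸ Real.sin_le hθ0
      nlinarith [hspos]
    have hsd : Real.sqrt d = Real.sqrt d := rfl
    have hsdpos : 0 < Real.sqrt (d : ℝ) := Real.sqrt_pos.2 (by linarith)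
    have hξsq : ξ ^ 2 ≤ θ ^ 2 / (16 * d) := by
      have h1 : ξ ^ 2 ≤ (θ / (4 * Real.sqrt d)) ^ 2 := by nlinarith
      have h2 : (4 * Real.sqrt (d : ℝ)) ^ 2 = 16 * d := by
        rw [mul_pow, Real.sq_sqrt (by linarith : (0:ℝ) ≤ (d:ℝ))]
        norm_num
      calc ξ ^ 2 ≤ (θ / (4 * Real.sqrt d)) ^ 2 := h1
        _ = θ ^ 2 / (16 * d) := by rw [div_pow, h2]
    have hD1 : (0:ℝ) < (d:ℝ) - 1 := by linarith
    have hDpos : (0:ℝ) < (d:ℝ) := by linarith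
    have t1 : cθ ^ 2 * ξ ^ 2 ≤ θ ^ 2 / (16 * d) := by nlinarith [sq_nonneg ξ, sq_nonneg cθ]
    have t2 : s ^ 2 * ((1 - ξ ^ 2) / ((d:ℝ) - 1)) ≤ θ ^ 2 / ((d:ℝ) - 1) := by
      rw [mul_div_assoc' , div_le_div_iff₀ hD1 hD1]
      nlinarith [mul_le_mul_of_nonneg_right hs2 hD1.le,
        mul_nonneg (mul_nonneg (sq_nonneg s) (sq_nonneg ξ)) hD1.le]
    have t3 : θ ^ 2 / (16 * d) + θ ^ 2 / ((d:ℝ) - 1) ≤ 5 * θ ^ 2 / d := by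
      rw [div_add_div _ _ (by positivity) hD1.ne', div_le_div_iff₀ (by positivity) hDpos]
      nlinarith [sq_nonneg θ, mul_nonneg (sq_nonneg θ) (by nlinarith : (0:ℝ) ≤ (d:ℝ) * (63 * (d:ℝ) - 79))]
    linarith
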